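/- There exist no real numbers v₁, v₂, v₃, c₁, c₂, c₃ and no threshold θ ≥ 0 such that for all i, j ∈ {1, 2, 3}: |v_j − c_i| ≤ θ if and only if i ≠ j. In other words, the 3×3 voting pattern with downvotes exactly on the diagonal and upvotes everywhere else cannot be realized by the unidimensional proximity voting model. -/
import Mathlib


/-- The 3×3 voting pattern with downvotes exactly on the diagonal and upvotes everywhere
else cannot be realized by the unidimensional proximity voting model: there are no real
opinions `v j`, `c i` and threshold `θ ≥ 0` such that `|v j - c i| ≤ θ ↔ i ≠ j`. -/
theorem no_unidimensional_proximity_realization :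
    ¬ ∃ (v c : Fin 3 → ℝ) (θ : ℝ), 0 ≤ θ ∧
      ∀ i j : Fin 3, |v j - c i| ≤ θ ↔ i ≠ j := by
  rintro ⟨v, c, θ, hθ, h⟩
  have off : ∀ i j : Fin 3, i ≠ j → -θ ≤ v j - c i ∧ v j - c i ≤ θ := fun i j hij =>
    abs_le.mp ((h i j).mpr hij)
  have diag : ∀ i : Fin 3, θ < v i - c i ∨ θ < -(v i - c i) := by
    intro i
    have h2 : θ < |v i - c i| := not_le.mp (fun hle => ((h i i).mp hle) rfl)
    exact lt_abs.mp h2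
  obtain ⟨a01, b01⟩ := off 0 1 (by decide)
  obtain ⟨a02, b02⟩ := off 0 2 (by decide)
  obtain ⟨a10, b10⟩ := off 1 0 (by decide)
  obtain ⟨a12, b12⟩ := off 1 2 (by decide)
  obtain ⟨a20, b20⟩ := off 2 0 (by decide)
  obtain ⟨a21, b21⟩ := off 2 1 (by decide)
  rcases diag 0 with d0 | d0 <;> rcases diag 1 with d1 | d1 <;>
    rcases diag 2 with d2 | d2 <;> linarith
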